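/- If a lattice L satisfies Whitman's condition (W), then its ideal lattice Id(L) also satisfies (W). -/
import Mathlib

/-- Whitman's condition (W). -/
def WhitmanCondition (α : Type*) [Lattice α] : Prop :=
  ∀ s t u v : α, s ⊓ t ≤ u ⊔ v → s ≤ u ⊔ v ∨ t ≤ u ⊔ v ∨ s ⊓ t ≤ u ∨ s ⊓ t ≤ v

/-- If a lattice `L` satisfies (W), then so does its ideal lattice `Id(L)`. -/
theorem idealLattice_whitman {L : Type*} [Lattice L] (hW : WhitmanCondition L) :
    WhitmanCondition (Order.Ideal L) := by
  intro S T U V hST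
  by_cases hS : S ≤ U ⊔ V
  · exact Or.inl hS
  by_cases hT : T ≤ U ⊔ V
  · exact Or.inr (Or.inl hT)
  by_cases hU : S ⊓ T ≤ U
  · exact Or.inr (Or.inr (Or.inl hU))
  refine Or.inr (Or.inr (Or.inr ?_))
  rw [SetLike.not_le_iff_exists] at hS hT hU
  obtain ⟨s, hsS, hs⟩ := hS
  obtain ⟨t, htT, ht⟩ := hT
  obtain ⟨w, hwST, hw⟩ := hU
  intro x hx
  simp only [SetLike.mem_coe, Order.Ideal.mem_inf] at hx hwST
  set s' := s ⊔ w ⊔ x with hs'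
  set t' := t ⊔ w ⊔ x with ht'
  have hs'S : s' ∈ S := S.sup_mem (S.sup_mem hsS hwST.1) hx.1
  have ht'T : t' ∈ T := T.sup_mem (T.sup_mem htT hwST.2) hx.2
  have hmem : s' ⊓ t' ∈ U ⊔ V := hST (Order.Ideal.mem_inf.mpr ⟨S.lower inf_le_left hs'S,
    T.lower inf_le_right ht'T⟩)
  rw [Order.Ideal.mem_sup] at hmem
  obtain ⟨u, huU, v, hvV, huv⟩ := hmem
  rcases hW s' t' u v huv with h | h | h | h
  · exact absurd (Order.Ideal.mem_sup.mpr ⟨u, huU, v, hvV,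
      le_trans (le_sup_left.trans le_sup_left) h⟩) hs
  · exact absurd (Order.Ideal.mem_sup.mpr ⟨u, huU, v, hvV,
      le_trans (le_sup_left.trans le_sup_left) h⟩) ht
  · exact absurd (U.lower (le_inf (le_sup_right.trans le_sup_left)
      (le_sup_right.trans le_sup_left) |>.trans h) huU) hw
  · exact SetLike.mem_coe.mpr <| V.lower ((le_inf le_sup_right le_sup_right).trans h) hvV
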